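/- In an almost-Reedy category, the factorization of any morphism f as f = h ∘ g with g basic degree-nonincreasing and h basic degree-nondecreasing is unique. -/

import Mathlib

open CategoryTheory Category

universe w v u

variable {C : Type u} [Category.{v} C]

/-- A fundamental factorization of `f : x ⟶ y`: a factorization through an
object of degree strictly smaller than the degrees of both `x` and `y`. -/
structure FdFact (deg : C → Ordinal.{w}) {x y : C} (f : x ⟶ y) where
  z : C
  g : x ⟶ z
  h : z ⟶ y
  fac : g ≫ h = f
  lt_src : deg z < deg x
  lt_tgt : deg z < deg y

/-- A morphism is basic if it admits no fundamental factorization. -/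
def Basic (deg : C → Ordinal.{w}) {x y : C} (f : x ⟶ y) : Prop :=
  IsEmpty (FdFact deg f)

/-- A connecting morphism between two fundamental factorizations of `f`. -/
def FdConn (deg : C → Ordinal.{w}) {x y : C} {f : x ⟶ y}
    (F F' : FdFact deg f) : Prop :=
  ∃ k : F.z ⟶ F'.z, F.g ≫ k = F'.g ∧ k ≫ F'.h = F.h

/-- Two fundamental factorizations are connected by a zigzag of connecting
morphisms. -/
def FdZigzag (deg : C → Ordinal.{w}) {x y : C} {f : x ⟶ y} :
    FdFact deg f → FdFact deg f → Prop :=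
  Relation.ReflTransGen (fun F F' => FdConn deg F F' ∨ FdConn deg F' F)

/-- `C` (with the degree function `deg`) is almost-Reedy: the basic level
morphisms are exactly the identities, and the category of fundamental
factorizations of any (non-basic) morphism is connected. -/
def AlmostReedy (deg : C → Ordinal.{w}) : Prop :=
  (∀ x : C, Basic deg (𝟙 x)) ∧
  (∀ ⦃x y : C⦄ (f : x ⟶ y), deg x = deg y → Basic deg f → x = y ∧ HEq f (𝟙 x)) ∧
  (∀ ⦃x y : C⦄ (f : x ⟶ y) (F F' : FdFact deg f), FdZigzag deg F F')

/-- The class `C⃖` of basic morphisms that non-strictly lower degree. -/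
def Lowering (deg : C → Ordinal.{w}) {x y : C} (f : x ⟶ y) : Prop :=
  Basic deg f ∧ deg y ≤ deg x

/-- The class `C⃗` of basic morphisms that non-strictly raise degree. -/
def Raising (deg : C → Ordinal.{w}) {x y : C} (f : x ⟶ y) : Prop :=
  Basic deg f ∧ deg x ≤ deg y

section Helpers

variable {deg : C → Ordinal.{w}} {x y : C} {f : x ⟶ y}

/-- The symmetric step relation of the zigzag. -/
def Stp (deg : C → Ordinal.{w}) {x y : C} {f : x ⟶ y} (F F' : FdFact deg f) : Prop :=
  FdConn deg F F' ∨ FdConn deg F' F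

lemma FdConn.refl (F : FdFact deg f) : FdConn deg F F :=
  ⟨𝟙 _, by simp⟩

lemma FdConn.comp {F G H : FdFact deg f} (h1 : FdConn deg F G) (h2 : FdConn deg G H) :
    FdConn deg F H := by
  obtain ⟨a, ha1, ha2⟩ := h1
  obtain ⟨b, hb1, hb2⟩ := h2
  exact ⟨a ≫ b, by rw [← Category.assoc, ha1, hb1], by rw [Category.assoc, hb2, ha2]⟩

lemma FdFact.ext' {F F' : FdFact deg f} (hz : F.z = F'.z)
    (hg : HEq F.g F'.g) (hh : HEq F.h F'.h) : F = F' := by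
  obtain ⟨z, g, h, _, _, _⟩ := F
  obtain ⟨z', g', h', _, _, _⟩ := F'
  dsimp at hz
  subst hz
  dsimp at hg hh
  cases eq_of_heq hg
  cases eq_of_heq hh
  rfl

/-- One-edge case: two (C⃖,C⃗) fundamental factorizations connected by a single
connecting morphism are equal. -/
lemma edge_eq (hC : AlmostReedy deg) {F F' : FdFact deg f}
    (hFh : Basic deg F.h) (hF'g : Basic deg F'.g) (hF'h : Basic deg F'.h)
    (h : FdConn deg F F') : F = F' := by
  obtain ⟨ξ, h1, h2⟩ := h
  -- ξ is basic
  have hbξ : Basic deg ξ := by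
    constructor
    intro Y
    exact hFh.false ⟨Y.z, Y.g, Y.h ≫ F'.h,
      by rw [← Category.assoc, Y.fac, h2], Y.lt_src, Y.lt_tgt.trans F'.lt_tgt⟩
  have e1 : deg F'.z ≤ deg F.z := by
    by_contra hlt
    exact hF'g.false ⟨F.z, F.g, ξ, h1, F.lt_src, not_le.mp hlt⟩
  have e2 : deg F.z ≤ deg F'.z := by
    by_contra hlt
    exact hFh.false ⟨F'.z, ξ, F'.h, h2, not_le.mp hlt, F'.lt_tgt⟩
  obtain ⟨hobj, hid⟩ := hC.2.1 ξ (le_antisymm e2 e1) hbξ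
  obtain ⟨z, g, h, fac, l1, l2⟩ := F
  obtain ⟨z', g', h', fac', l1', l2'⟩ := F'
  dsimp at ξ hobj hid h1 h2 hFh hF'g hF'h e1 e2
  subst hobj
  rw [eq_of_heq hid] at h1 h2
  refine FdFact.ext' rfl ?_ ?_ <;> dsimp
  · rw [← h1, Category.comp_id]
  · rw [← h2, Category.id_comp]

end Helpers

section ListMach

open List

variable {β : Type*} (d : β → Ordinal.{w})

/-- maximum degree in a list -/
noncomputable def mxd (l : List β) : Ordinal.{w} := (l.map d).foldr max 0

lemma mxd_nil : mxd d ([] : List β) = 0 := rfl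

lemma mxd_cons (a : β) (l : List β) : mxd d (a :: l) = max (d a) (mxd d l) := rfl

lemma mxd_append (l₁ l₂ : List β) : mxd d (l₁ ++ l₂) = max (mxd d l₁) (mxd d l₂) := by
  induction l₁ with
  | nil => simp [mxd]
  | cons a t ih =>
      rw [List.cons_append, mxd_cons, mxd_cons, ih, max_assoc]

lemma le_mxd_of_mem {v : β} {l : List β} (h : v ∈ l) : d v ≤ mxd d l := by
  induction l with
  | nil => simp at h
  | cons a t ih =>
      rw [mxd_cons]
      rcases List.mem_cons.mp h with h | h
      · subst h; exact le_max_left _ _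
      · exact (ih h).trans (le_max_right _ _)

lemma mxd_le {l : List β} {c : Ordinal.{w}} (h : ∀ v ∈ l, d v ≤ c) : mxd d l ≤ c := by
  induction l with
  | nil => rw [mxd_nil]; exact zero_le (a := c)
  | cons a t ih =>
      rw [mxd_cons]
      exact max_le (h a List.mem_cons_self) (ih fun v hv => h v (List.mem_cons_of_mem a hv))

open Classical in
/-- count of elements at a given degree -/
noncomputable def cntd (c : Ordinal.{w}) (l : List β) : ℕ :=
  l.countP (fun v => decide (d v = c))

open Classical in
lemma cntd_append (c : Ordinal.{w}) (l₁ l₂ : List β) :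
    cntd d c (l₁ ++ l₂) = cntd d c l₁ + cntd d c l₂ :=
  List.countP_append

open Classical in
lemma cntd_cons_eq {c : Ordinal.{w}} {a : β} (h : d a = c) (l : List β) :
    cntd d c (a :: l) = cntd d c l + 1 := by
  unfold cntd
  rw [List.countP_cons]
  simp [h]

open Classical in
lemma cntd_eq_zero {c : Ordinal.{w}} {l : List β} (h : ∀ v ∈ l, d v ≠ c) :
    cntd d c l = 0 := by
  unfold cntd
  rw [List.countP_eq_zero]
  intro a ha
  simpa using h a ha

/-- split a nonempty list at a maximal element -/
lemma exists_max_split (l : List β) (hne : l ≠ []) :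
    ∃ l₁ W l₂, l = l₁ ++ W :: l₂ ∧ ∀ v ∈ l, d v ≤ d W := by
  induction l with
  | nil => exact absurd rfl hne
  | cons a t ih =>
      rcases eq_or_ne t [] with rfl | htne
      · exact ⟨[], a, [], rfl, by simp⟩
      · obtain ⟨l₁, W, l₂, hsplit, hmax⟩ := ih htne
        rcases le_or_gt (d a) (d W) with hle | hlt
        · refine ⟨a :: l₁, W, l₂, by rw [hsplit, List.cons_append], ?_⟩
          intro v hv
          rcases List.mem_cons.mp hv with rfl | hv
          · exact hle
          · exact hmax v hv
        · refine ⟨[], a, t, rfl, ?_⟩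
          intro v hv
          rcases List.mem_cons.mp hv with rfl | hv
          · exact le_rfl
          · exact (hmax v hv).trans hlt.le

/-- The measure decrease lemma: replacing a maximal element by strictly smaller
elements decreases the lexicographic measure (max degree, count at max). -/
lemma measure_decrease {l₁ l₂ mid : List β} {W : β}
    (hW : d W = mxd d (l₁ ++ W :: l₂))
    (hmid : ∀ v ∈ mid, d v < d W) :
    (mxd d (l₁ ++ mid ++ l₂) < mxd d (l₁ ++ W :: l₂)) ∨
    (mxd d (l₁ ++ mid ++ l₂) = mxd d (l₁ ++ W :: l₂) ∧
      cntd d (mxd d (l₁ ++ W :: l₂)) (l₁ ++ mid ++ l₂) <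
      cntd d (mxd d (l₁ ++ W :: l₂)) (l₁ ++ W :: l₂)) := by
  set μ := mxd d (l₁ ++ W :: l₂) with hμ
  have hle : mxd d (l₁ ++ mid ++ l₂) ≤ μ := by
    apply mxd_le
    intro v hv
    rw [hμ, mxd_append, mxd_cons]
    simp only [List.append_assoc, List.mem_append] at hv
    rcases hv with hv | hv | hv
    · exact (le_mxd_of_mem d hv).trans (le_max_left _ _)
    · exact (hmid v hv).le.trans (hW.symm ▸ (le_max_left _ _).trans (le_max_right _ _))
    · exact (le_mxd_of_mem d hv).trans ((le_max_right _ _).trans (le_max_right _ _))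
  rcases lt_or_eq_of_le hle with hlt | heq
  · exact Or.inl hlt
  · refine Or.inr ⟨heq, ?_⟩
    have h1 : cntd d μ (l₁ ++ W :: l₂) = cntd d μ l₁ + (cntd d μ l₂ + 1) := by
      rw [cntd_append, cntd_cons_eq d (hμ ▸ hW)]
    have h2 : cntd d μ (l₁ ++ mid ++ l₂)
        = cntd d μ l₁ + cntd d μ mid + cntd d μ l₂ := by
      rw [cntd_append, cntd_append]
    have h3 : cntd d μ mid = 0 := by
      apply cntd_eq_zero
      intro v hv
      exact ne_of_lt ((hmid v hv).trans_le (le_of_eq hW))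
    rw [h1, h2, h3]
    omega

end ListMach

section Lifts

variable {deg : C → Ordinal.{w}} {x y : C} {f : x ⟶ y}

/-- Lift of a fundamental factorization of `W.h` to one of `f`. -/
def liftH (W : FdFact deg f) (Y : FdFact deg W.h) : FdFact deg f where
  z := Y.z
  g := W.g ≫ Y.g
  h := Y.h
  fac := by rw [Category.assoc, Y.fac, W.fac]
  lt_src := Y.lt_src.trans W.lt_src
  lt_tgt := Y.lt_tgt

/-- Lift of a fundamental factorization of `W.g` to one of `f`. -/
def liftG (W : FdFact deg f) (Y : FdFact deg W.g) : FdFact deg f where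
  z := Y.z
  g := Y.g
  h := Y.h ≫ W.h
  fac := by rw [← Category.assoc, Y.fac, W.fac]
  lt_src := Y.lt_src
  lt_tgt := Y.lt_tgt.trans W.lt_tgt

lemma liftH_conn (W : FdFact deg f) {Y Y' : FdFact deg W.h}
    (h : FdConn deg Y Y') : FdConn deg (liftH W Y) (liftH W Y') := by
  obtain ⟨c, h1, h2⟩ := h
  exact ⟨c, by dsimp [liftH]; rw [Category.assoc, h1], h2⟩

lemma liftG_conn (W : FdFact deg f) {Y Y' : FdFact deg W.g}
    (h : FdConn deg Y Y') : FdConn deg (liftG W Y) (liftG W Y') := by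
  obtain ⟨c, h1, h2⟩ := h
  exact ⟨c, h1, by dsimp [liftG]; rw [← Category.assoc, h2]⟩

lemma chain_map_liftH (W : FdFact deg f) {Y : FdFact deg W.h} {l : List (FdFact deg W.h)}
    (h : List.Chain (Stp deg) Y l) :
    List.Chain (Stp deg) (liftH W Y) (l.map (liftH W)) := by
  exact List.isChain_map_of_isChain (liftH W) (fun a b hab => hab.imp (liftH_conn W) (liftH_conn W)) h

lemma chain_map_liftG (W : FdFact deg f) {Y : FdFact deg W.g} {l : List (FdFact deg W.g)}
    (h : List.Chain (Stp deg) Y l) :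
    List.Chain (Stp deg) (liftG W Y) (l.map (liftG W)) := by
  exact List.isChain_map_of_isChain (liftG W) (fun a b hab => hab.imp (liftG_conn W) (liftG_conn W)) h

/-- Extract a list-chain from a zigzag. -/
lemma zig_to_chain {F F' : FdFact deg f} (h : FdZigzag deg F F') :
    ∃ l : List (FdFact deg f), List.Chain (Stp deg) F (l ++ [F']) := by
  induction h with
  | refl =>
      exact ⟨[], List.chain_cons.mpr ⟨Or.inl (FdConn.refl F), List.Chain.nil⟩⟩
  | @tail b c _ step ih =>
      obtain ⟨l, hl⟩ := ih
      refine ⟨l ++ [b], ?_⟩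
      rw [List.append_assoc]
      exact List.isChain_cons_split.mpr ⟨hl, List.chain_cons.mpr ⟨step, List.Chain.nil⟩⟩

/-- If there is a connecting morphism `W ⟶ N` and `N.g` is basic, then `deg N.z ≤ deg W.z`. -/
lemma conn_to_le {W N : FdFact deg f} (h : FdConn deg W N) (hb : Basic deg N.g) :
    deg N.z ≤ deg W.z := by
  obtain ⟨m, hm1, hm2⟩ := h
  by_contra hlt
  exact hb.false ⟨W.z, W.g, m, hm1, W.lt_src, not_le.mp hlt⟩

/-- If there is a connecting morphism `N ⟶ W` and `N.h` is basic, then `deg N.z ≤ deg W.z`. -/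
lemma conn_from_le {W N : FdFact deg f} (h : FdConn deg N W) (hb : Basic deg N.h) :
    deg N.z ≤ deg W.z := by
  obtain ⟨m, hm1, hm2⟩ := h
  by_contra hlt
  exact hb.false ⟨W.z, m, W.h, hm2, not_le.mp hlt, W.lt_tgt⟩

/-- Peel a connecting morphism out of a "peak" vertex `W`:
either `W` merges with its neighbour, or the neighbour is reached from a
fundamental factorization of `W.h`. -/
lemma peel_peak (hC : AlmostReedy deg) {W N : FdFact deg f} (h : FdConn deg W N) (hle : deg N.z ≤ deg W.z) :
    W = N ∨ ∃ Y : FdFact deg W.h, deg Y.z < deg W.z ∧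
      (liftH W Y = N ∨ FdConn deg (liftH W Y) N) := by
  obtain ⟨m, hm1, hm2⟩ := h
  rcases lt_or_eq_of_le hle with hlt | heq
  · refine Or.inr ⟨⟨N.z, m, N.h, hm2, hlt, N.lt_tgt⟩, hlt, Or.inl ?_⟩
    exact FdFact.ext' rfl (heq_of_eq hm1) HEq.rfl
  · by_cases hb : Basic deg m
    · left
      obtain ⟨hobj, hid⟩ := hC.2.1 m heq.symm hb
      obtain ⟨Wz, Wg, Wh, Wfac, Wl1, Wl2⟩ := W
      obtain ⟨Nz, Ng, Nh, Nfac, Nl1, Nl2⟩ := N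
      dsimp at m hobj hid hm1 hm2
      subst hobj
      rw [eq_of_heq hid] at hm1 hm2
      refine FdFact.ext' rfl ?_ ?_ <;> dsimp
      · rw [← hm1, Category.comp_id]
      · rw [← hm2, Category.id_comp]
    · obtain ⟨Ym⟩ := not_isEmpty_iff.mp hb
      refine Or.inr ⟨⟨Ym.z, Ym.g, Ym.h ≫ N.h,
        by rw [← Category.assoc, Ym.fac, hm2], Ym.lt_src, Ym.lt_tgt.trans N.lt_tgt⟩,
        Ym.lt_src, Or.inr ⟨Ym.h, ?_, rfl⟩⟩
      dsimp [liftH]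
      rw [Category.assoc, Ym.fac, hm1]

/-- Peel a connecting morphism into a "valley" vertex `W`. -/
lemma peel_valley (hC : AlmostReedy deg) {W N : FdFact deg f} (h : FdConn deg N W) (hle : deg N.z ≤ deg W.z) :
    W = N ∨ ∃ Y : FdFact deg W.g, deg Y.z < deg W.z ∧
      (liftG W Y = N ∨ FdConn deg N (liftG W Y)) := by
  obtain ⟨m, hm1, hm2⟩ := h
  rcases lt_or_eq_of_le hle with hlt | heq
  · refine Or.inr ⟨⟨N.z, N.g, m, hm1, N.lt_src, hlt⟩, hlt, Or.inl ?_⟩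
    exact FdFact.ext' rfl HEq.rfl (heq_of_eq hm2)
  · by_cases hb : Basic deg m
    · left
      obtain ⟨hobj, hid⟩ := hC.2.1 m heq hb
      obtain ⟨Wz, Wg, Wh, Wfac, Wl1, Wl2⟩ := W
      obtain ⟨Nz, Ng, Nh, Nfac, Nl1, Nl2⟩ := N
      dsimp at m hobj hid hm1 hm2
      subst hobj
      rw [eq_of_heq hid] at hm1 hm2
      refine FdFact.ext' rfl ?_ ?_ <;> dsimp
      · rw [← hm1, Category.comp_id]
      · rw [← hm2, Category.id_comp]
    · obtain ⟨Ym⟩ := not_isEmpty_iff.mp hb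
      refine Or.inr ⟨⟨Ym.z, N.g ≫ Ym.g, Ym.h,
        by rw [Category.assoc, Ym.fac, hm1], Ym.lt_src.trans N.lt_src, Ym.lt_tgt⟩,
        Ym.lt_tgt, Or.inr ⟨Ym.g, rfl, ?_⟩⟩
      dsimp [liftG]
      rw [← Category.assoc, Ym.fac, hm2]

end Lifts

section Main

variable {deg : C → Ordinal.{w}} {x y : C} {f : x ⟶ y}

lemma main_zig (hC : AlmostReedy deg) (μ : Ordinal.{w}) :
    ∀ (n : ℕ) (l : List (FdFact deg f)) (F F' : FdFact deg f),
      mxd (fun v => deg v.z) l ≤ μ →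
      (mxd (fun v => deg v.z) l = μ → cntd (fun v => deg v.z) μ l ≤ n) →
      Basic deg F.g → Basic deg F.h → Basic deg F'.g → Basic deg F'.h →
      List.Chain (Stp deg) F (l ++ [F']) → F = F' := by
  induction μ using Ordinal.induction with
  | _ μ IHμ =>
  intro n
  induction n using Nat.strong_induction_on with
  | _ n IHn =>
  intro l F F' hμle hcnt hFg hFh hF'g hF'h hchain
  rcases lt_or_eq_of_le hμle with hμlt | hmeq
  · exact IHμ _ hμlt _ l F F' le_rfl (fun _ => le_rfl) hFg hFh hF'g hF'h hchain
  -- now mxd l = μ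
  rcases eq_or_ne l [] with rfl | hlne
  · -- base case: a single edge
    have hstp : Stp deg F F' := by exact List.rel_of_isChain_cons_cons hchain
    rcases hstp with h | h
    · exact edge_eq hC hFh hF'g hF'h h
    · exact (edge_eq hC hF'h hFg hFh h).symm
  obtain ⟨l₁, W, l₂, hsplit, hmax⟩ := exists_max_split (fun v => deg v.z) l hlne
  subst hsplit
  have hWmem : W ∈ l₁ ++ W :: l₂ := List.mem_append_right _ List.mem_cons_self
  have hWmx : deg W.z = mxd (fun v : FdFact deg f => deg v.z) (l₁ ++ W :: l₂) :=
    le_antisymm (le_mxd_of_mem _ hWmem) (mxd_le _ hmax)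
  rw [List.append_assoc, List.cons_append] at hchain
  obtain ⟨hL, hR⟩ := List.isChain_cons_split.mp hchain
  -- B side
  obtain ⟨B, rest, hBR, hBmem⟩ :
      ∃ B rest, l₂ ++ [F'] = B :: rest ∧ (B ∈ l₁ ++ W :: l₂ ∨ B = F') := by
    cases l₂ with
    | nil => exact ⟨F', [], rfl, Or.inr rfl⟩
    | cons b t =>
        exact ⟨b, t ++ [F'], rfl, Or.inl (List.mem_append_right _
          (List.mem_cons_of_mem _ List.mem_cons_self))⟩
  rw [hBR] at hR
  obtain ⟨hStpWB, hChB⟩ := List.chain_cons.mp hR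
  -- A side
  obtain ⟨A, hAmem, hStpAW, hAssemble⟩ :
      ∃ A, (A ∈ l₁ ++ W :: l₂ ∨ A = F) ∧ Stp deg A W ∧
        (∀ X : List (FdFact deg f), List.Chain (Stp deg) A X →
          List.Chain (Stp deg) F (l₁ ++ X)) := by
    rcases List.eq_nil_or_concat l₁ with rfl | ⟨ws, A, hl₁⟩
    · refine ⟨F, Or.inr rfl, by exact List.rel_of_isChain_cons_cons hL,
        fun X hX => by simpa using hX⟩
    · rw [List.concat_eq_append] at hl₁
      subst hl₁
      rw [List.append_assoc] at hL
      obtain ⟨h1, h2⟩ := List.isChain_cons_split.mp hL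
      refine ⟨A, Or.inl (by simp), (List.chain_cons.mp h2).1, fun X hX => ?_⟩
      rw [List.append_assoc]
      exact List.isChain_cons_split.mpr ⟨h1, hX⟩
  -- degree bounds for the neighbours
  have hALe : deg A.z ≤ deg W.z := by
    rcases hAmem with hm | rfl
    · exact hmax A hm
    · rcases hStpAW with h | h
      · exact conn_from_le h hFh
      · exact conn_to_le h hFg
  have hBLe : deg B.z ≤ deg W.z := by
    rcases hBmem with hm | rfl
    · exact hmax B hm
    · rcases hStpWB with h | h
      · exact conn_to_le h hF'g
      · exact conn_from_le h hF'h
  -- the finishing move: replace W by a list of strictly smaller facts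
  have finish : ∀ mid : List (FdFact deg f), (∀ v ∈ mid, deg v.z < deg W.z) →
      List.Chain (Stp deg) A (mid ++ B :: rest) → F = F' := by
    intro mid hmid hchA
    have he : (l₁ ++ mid ++ l₂) ++ [F'] = l₁ ++ (mid ++ B :: rest) := by
      rw [List.append_assoc, List.append_assoc, hBR]
    have hchF : List.Chain (Stp deg) F ((l₁ ++ mid ++ l₂) ++ [F']) := by
      rw [he]; exact hAssemble _ hchA
    rcases measure_decrease (d := fun v : FdFact deg f => deg v.z)
        (l₁ := l₁) (l₂ := l₂) (mid := mid) hWmx hmid with hlt | ⟨heq, hclt⟩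
    · rw [hmeq] at hlt
      exact IHμ _ hlt _ _ F F' le_rfl (fun _ => le_rfl) hFg hFh hF'g hF'h hchF
    · rw [hmeq] at heq hclt
      exact IHn _ (lt_of_lt_of_le hclt (hcnt hmeq)) _ F F'
        (le_of_eq heq) (fun _ => le_rfl) hFg hFh hF'g hF'h hchF
  rcases hStpAW with hAW | hWA <;> rcases hStpWB with hWB | hBW
  · -- through: A ⟶ W ⟶ B
    exact finish [] (by simp) (List.chain_cons.mpr ⟨Or.inl (hAW.comp hWB), hChB⟩)
  · -- valley: A ⟶ W ⟵ B
    rcases peel_valley hC hAW hALe with hWA' | ⟨Y_A, hYAlt, hYA⟩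
    · rw [hWA'] at hBW
      exact finish [] (by simp) (List.chain_cons.mpr ⟨Or.inr hBW, hChB⟩)
    rcases peel_valley hC hBW hBLe with hWB' | ⟨Y_B, hYBlt, hYB⟩
    · rw [hWB'] at hAW
      exact finish [] (by simp) (List.chain_cons.mpr ⟨Or.inl hAW, hChB⟩)
    obtain ⟨lψ, hψ⟩ := zig_to_chain (hC.2.2 W.g Y_A Y_B)
    have hmapped := chain_map_liftG W hψ
    rw [List.map_append, List.map_singleton] at hmapped
    have hmapmem : ∀ v ∈ (lψ.map (liftG W)), deg v.z < deg W.z := by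
      intro v hv
      obtain ⟨u, hu, rfl⟩ := List.mem_map.mp hv
      exact u.lt_tgt
    obtain ⟨midB, hmidBb, hchainB⟩ :
        ∃ midB, (∀ v ∈ midB, deg v.z < deg W.z) ∧
          List.Chain (Stp deg) (liftG W Y_A) (midB ++ B :: rest) := by
      rcases hYB with hBeq | hBconn
      · rw [hBeq] at hmapped
        exact ⟨lψ.map (liftG W), hmapmem, List.isChain_cons_split.mpr ⟨hmapped, hChB⟩⟩
      · refine ⟨lψ.map (liftG W) ++ [liftG W Y_B], ?_, ?_⟩
        · intro v hv
          rcases List.mem_append.mp hv with hv | hv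
          · exact hmapmem v hv
          · rw [List.mem_singleton.mp hv]; exact hYBlt
        · rw [List.append_assoc, List.singleton_append]
          exact List.isChain_cons_split.mpr ⟨hmapped,
            List.chain_cons.mpr ⟨Or.inr hBconn, hChB⟩⟩
    rcases hYA with hAeq | hAconn
    · rw [hAeq] at hchainB
      exact finish midB hmidBb hchainB
    · refine finish (liftG W Y_A :: midB) ?_
        (List.chain_cons.mpr ⟨Or.inl hAconn, hchainB⟩)
      intro v hv
      rcases List.mem_cons.mp hv with rfl | hv
      · exact hYAlt
      · exact hmidBb v hv
  · -- peak: A ⟵ W ⟶ B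
    rcases peel_peak hC hWA hALe with hWA' | ⟨Y_A, hYAlt, hYA⟩
    · rw [hWA'] at hWB
      exact finish [] (by simp) (List.chain_cons.mpr ⟨Or.inl hWB, hChB⟩)
    rcases peel_peak hC hWB hBLe with hWB' | ⟨Y_B, hYBlt, hYB⟩
    · rw [hWB'] at hWA
      exact finish [] (by simp) (List.chain_cons.mpr ⟨Or.inr hWA, hChB⟩)
    obtain ⟨lψ, hψ⟩ := zig_to_chain (hC.2.2 W.h Y_A Y_B)
    have hmapped := chain_map_liftH W hψ
    rw [List.map_append, List.map_singleton] at hmapped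
    have hmapmem : ∀ v ∈ (lψ.map (liftH W)), deg v.z < deg W.z := by
      intro v hv
      obtain ⟨u, hu, rfl⟩ := List.mem_map.mp hv
      exact u.lt_src
    obtain ⟨midB, hmidBb, hchainB⟩ :
        ∃ midB, (∀ v ∈ midB, deg v.z < deg W.z) ∧
          List.Chain (Stp deg) (liftH W Y_A) (midB ++ B :: rest) := by
      rcases hYB with hBeq | hBconn
      · rw [hBeq] at hmapped
        exact ⟨lψ.map (liftH W), hmapmem, List.isChain_cons_split.mpr ⟨hmapped, hChB⟩⟩
      · refine ⟨lψ.map (liftH W) ++ [liftH W Y_B], ?_, ?_⟩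
        · intro v hv
          rcases List.mem_append.mp hv with hv | hv
          · exact hmapmem v hv
          · rw [List.mem_singleton.mp hv]; exact hYBlt
        · rw [List.append_assoc, List.singleton_append]
          exact List.isChain_cons_split.mpr ⟨hmapped,
            List.chain_cons.mpr ⟨Or.inl hBconn, hChB⟩⟩
    rcases hYA with hAeq | hAconn
    · rw [hAeq] at hchainB
      exact finish midB hmidBb hchainB
    · refine finish (liftH W Y_A :: midB) ?_
        (List.chain_cons.mpr ⟨Or.inr hAconn, hchainB⟩)
      intro v hv
      rcases List.mem_cons.mp hv with rfl | hv
      · exact hYAlt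
      · exact hmidBb v hv
  · -- through reversed: A ⟵ W ⟵ B
    exact finish [] (by simp) (List.chain_cons.mpr ⟨Or.inr (hBW.comp hWA), hChB⟩)

end Main

/-- In an almost-Reedy category, the factorization of a morphism as a basic
non-strictly degree-lowering morphism followed by a basic non-strictly
degree-raising one is unique. -/
theorem almostReedy_factorization_unique (deg : C → Ordinal.{w})
    (hC : AlmostReedy deg) {x y z z' : C} (f : x ⟶ y)
    (g : x ⟶ z) (k : z ⟶ y) (g' : x ⟶ z') (k' : z' ⟶ y)
    (hfac : g ≫ k = f) (hfac' : g' ≫ k' = f)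
    (hg : Lowering deg g) (hk : Raising deg k)
    (hg' : Lowering deg g') (hk' : Raising deg k') :
    z = z' ∧ HEq g g' ∧ HEq k k' := by
  rcases lt_or_eq_of_le hg.2 with hzx | hzx
  · rcases lt_or_eq_of_le hk.2 with hzy | hzy
    · -- F = ⟨z,g,k⟩ is fundamental
      rcases lt_or_eq_of_le hg'.2 with hz'x | hz'x
      · rcases lt_or_eq_of_le hk'.2 with hz'y | hz'y
        · -- both fundamental : main case
          have hzig := hC.2.2 f ⟨z, g, k, hfac, hzx, hzy⟩ ⟨z', g', k', hfac', hz'x, hz'y⟩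
          obtain ⟨l, hl⟩ := zig_to_chain hzig
          have h := main_zig hC (mxd (fun v => deg v.z) l)
            (cntd (fun v => deg v.z) (mxd (fun v => deg v.z) l) l) l
            ⟨z, g, k, hfac, hzx, hzy⟩ ⟨z', g', k', hfac', hz'x, hz'y⟩
            le_rfl (fun _ => le_rfl) hg.1 hk.1 hg'.1 hk'.1 hl
          injection h with h1 h2 h3
          exact ⟨h1, h2, h3⟩
        · -- A2 : k' level
          obtain ⟨h1, h2⟩ := hC.2.1 k' hz'y hk'.1
          subst h1
          have hk'id : k' = 𝟙 z' := eq_of_heq h2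
          have hg'f : g' = f := by rw [← hfac', hk'id, Category.comp_id]
          have hbf : Basic deg f := hg'f ▸ hg'.1
          exact (hbf.false ⟨z, g, k, hfac, hzx, hzy⟩).elim
      · -- A3 : g' level
        obtain ⟨h1, h2⟩ := hC.2.1 g' hz'x.symm hg'.1
        subst h1
        have hg'id : g' = 𝟙 x := eq_of_heq h2
        have hk'f : k' = f := by rw [← hfac', hg'id, Category.id_comp]
        have hbf : Basic deg f := hk'f ▸ hk'.1
        exact (hbf.false ⟨z, g, k, hfac, hzx, hzy⟩).elim
    · -- B : k level, z = y
      obtain ⟨h1, h2⟩ := hC.2.1 k hzy hk.1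
      subst h1
      have hkid : k = 𝟙 z := eq_of_heq h2
      have hgf : g = f := by rw [← hfac, hkid, Category.comp_id]
      have hbf : Basic deg f := hgf ▸ hg.1
      rcases lt_or_eq_of_le hg'.2 with hz'x | hz'x
      · rcases lt_or_eq_of_le hk'.2 with hz'y | hz'y
        · exact (hbf.false ⟨z', g', k', hfac', hz'x, hz'y⟩).elim
        · -- B2 : k' level as well, z' = z
          obtain ⟨h1', h2'⟩ := hC.2.1 k' hz'y hk'.1
          subst h1'
          have hk'id : k' = 𝟙 z' := eq_of_heq h2'
          have hg'f : g' = f := by rw [← hfac', hk'id, Category.comp_id]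
          exact ⟨rfl, heq_of_eq (by rw [hgf, hg'f]), heq_of_eq (by rw [hkid, hk'id])⟩
      · -- B3 : g' level, z' = x
        obtain ⟨h1', h2'⟩ := hC.2.1 g' hz'x.symm hg'.1
        subst h1'
        have hg'id : g' = 𝟙 x := eq_of_heq h2'
        have hk'f : k' = f := by rw [← hfac', hg'id, Category.id_comp]
        have hxz : deg x = deg z := le_antisymm hk'.2 hg.2
        obtain ⟨h1'', h2''⟩ := hC.2.1 g hxz hg.1
        subst h1''
        have hgid : g = 𝟙 x := eq_of_heq h2''
        exact ⟨rfl, heq_of_eq (by rw [hgid, hg'id]),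
          heq_of_eq (by rw [hkid, hk'f, ← hgf, hgid])⟩
  · -- C : g level, x = z
    obtain ⟨h1, h2⟩ := hC.2.1 g hzx.symm hg.1
    subst h1
    have hgid : g = 𝟙 x := eq_of_heq h2
    have hkf : k = f := by rw [← hfac, hgid, Category.id_comp]
    have hbf : Basic deg f := hkf ▸ hk.1
    rcases lt_or_eq_of_le hg'.2 with hz'x | hz'x
    · rcases lt_or_eq_of_le hk'.2 with hz'y | hz'y
      · exact (hbf.false ⟨z', g', k', hfac', hz'x, hz'y⟩).elim
      · -- C3 : k' level, z' = y
        obtain ⟨h1', h2'⟩ := hC.2.1 k' hz'y hk'.1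
        subst h1'
        have hk'id : k' = 𝟙 z' := eq_of_heq h2'
        have hg'f : g' = f := by rw [← hfac', hk'id, Category.comp_id]
        have hxz' : deg x = deg z' := le_antisymm hk.2 hg'.2
        obtain ⟨h1'', h2''⟩ := hC.2.1 f hxz' hbf
        subst h1''
        have hfid : f = 𝟙 x := eq_of_heq h2''
        exact ⟨rfl, heq_of_eq (by rw [hgid, hg'f, hfid]),
          heq_of_eq (by rw [hkf, hfid, hk'id])⟩
    · -- C2 : g' level, z' = x
      obtain ⟨h1', h2'⟩ := hC.2.1 g' hz'x.symm hg'.1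
      subst h1'
      have hg'id : g' = 𝟙 x := eq_of_heq h2'
      have hk'f : k' = f := by rw [← hfac', hg'id, Category.id_comp]
      exact ⟨rfl, heq_of_eq (by rw [hgid, hg'id]), heq_of_eq (by rw [hkf, hk'f])⟩
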